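/- arXiv:2203.12959 — 2 statements merged into one kernel-verified Lean document; each statement's English description precedes it below -/
import Mathlib

section
/- Let Π ∈ Π_{q,r}. Then the set Z_r(Π) has nonempty interior (as a subset of ℝ^{r×q}) if and only if Π₂₂ = 0 or the generalized Schur complement Π|Π₂₂ is positive definite. -/
open Matrix
open scoped Classical

/-- The Moore–Penrose pseudoinverse of a real matrix, defined via its four
characterizing Penrose conditions (which determine it uniquely). -/
noncomputable def pinv {m n : ℕ} (A : Matrix (Fin m) (Fin n) ℝ) : Matrix (Fin n) (Fin m) ℝ :=
  if h : ∃ B : Matrix (Fin n) (Fin m) ℝ,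
      A * B * A = A ∧ B * A * B = B ∧ (A * B)ᵀ = A * B ∧ (B * A)ᵀ = B * A
  then h.choose else 0

/-- The unique positive semidefinite square root of a positive semidefinite matrix
(defined by its characterizing property, which determines it uniquely). -/
noncomputable def msqrt {n : ℕ} (A : Matrix (Fin n) (Fin n) ℝ) : Matrix (Fin n) (Fin n) ℝ :=
  if h : ∃ B : Matrix (Fin n) (Fin n) ℝ, B.PosSemidef ∧ B * B = A then h.choose else 0

/-- The quadratic matrix expression `[I; Z]ᵀ Π [I; Z]`. -/
noncomputable def qmi {q r : ℕ} (P : Matrix (Fin q ⊕ Fin r) (Fin q ⊕ Fin r) ℝ)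
    (Z : Matrix (Fin r) (Fin q) ℝ) : Matrix (Fin q) (Fin q) ℝ :=
  (fromRows (1 : Matrix (Fin q) (Fin q) ℝ) Z)ᵀ * P * fromRows 1 Z

/-- The solution set `Z_r(Π)` of the nonstrict QMI. -/
def ZrSet {q r : ℕ} (P : Matrix (Fin q ⊕ Fin r) (Fin q ⊕ Fin r) ℝ) :
    Set (Matrix (Fin r) (Fin q) ℝ) := {Z | (qmi P Z).PosSemidef}

/-- The solution set `Z_r⁺(Π)` of the strict QMI. -/
def ZrPlusSet {q r : ℕ} (P : Matrix (Fin q ⊕ Fin r) (Fin q ⊕ Fin r) ℝ) :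
    Set (Matrix (Fin r) (Fin q) ℝ) := {Z | (qmi P Z).PosDef}

/-- The solution set `Z_r⁰(Π)` of the quadratic matrix equality. -/
def ZrZeroSet {q r : ℕ} (P : Matrix (Fin q ⊕ Fin r) (Fin q ⊕ Fin r) ℝ) :
    Set (Matrix (Fin r) (Fin q) ℝ) := {Z | qmi P Z = 0}

/-- Generalized Schur complement `Π|Π₂₂ = Π₁₁ − Π₁₂ Π₂₂^† Π₂₁`. -/
noncomputable def schurC {q r : ℕ} (P : Matrix (Fin q ⊕ Fin r) (Fin q ⊕ Fin r) ℝ) :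
    Matrix (Fin q) (Fin q) ℝ :=
  P.toBlocks₁₁ - P.toBlocks₁₂ * pinv P.toBlocks₂₂ * P.toBlocks₂₁

/-- Membership in the class `Π_{q,r}`: symmetric, `Π₂₂ ⪯ 0`, `Π|Π₂₂ ⪰ 0`,
and `ker Π₂₂ ⊆ ker Π₁₂`. -/
def memPi {q r : ℕ} (P : Matrix (Fin q ⊕ Fin r) (Fin q ⊕ Fin r) ℝ) : Prop :=
  P.IsSymm ∧ (-P.toBlocks₂₂).PosSemidef ∧ (schurC P).PosSemidef ∧
    ∀ x : Fin r → ℝ, P.toBlocks₂₂ *ᵥ x = 0 → P.toBlocks₁₂ *ᵥ x = 0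

/- ### Auxiliary lemmas -/

open Topology Filter

/-- The four Penrose conditions. -/
def Penrose {m n : ℕ} (A : Matrix (Fin m) (Fin n) ℝ) (B : Matrix (Fin n) (Fin m) ℝ) : Prop :=
  A * B * A = A ∧ B * A * B = B ∧ (A * B)ᵀ = A * B ∧ (B * A)ᵀ = B * A

lemma penrose_unique {m n : ℕ} {A : Matrix (Fin m) (Fin n) ℝ} {X Y : Matrix (Fin n) (Fin m) ℝ}
    (hX : Penrose A X) (hY : Penrose A Y) : X = Y := by
  obtain ⟨hX1, hX2, hX3, hX4⟩ := hX
  obtain ⟨hY1, hY2, hY3, hY4⟩ := hY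
  have hAX : A * X = A * Y := by
    calc A * X = (A * X)ᵀ := hX3.symm
    _ = Xᵀ * Aᵀ := transpose_mul _ _
    _ = Xᵀ * (A * Y * A)ᵀ := by rw [hY1]
    _ = (A * X)ᵀ * (A * Y)ᵀ := by simp only [transpose_mul, Matrix.mul_assoc]
    _ = A * X * (A * Y) := by rw [hX3, hY3]
    _ = A * Y := by rw [← Matrix.mul_assoc, hX1]
  have hXA : X * A = Y * A := by
    calc X * A = (X * A)ᵀ := hX4.symm
    _ = Aᵀ * Xᵀ := transpose_mul _ _
    _ = (A * Y * A)ᵀ * Xᵀ := by rw [hY1]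
    _ = (Y * A)ᵀ * (X * A)ᵀ := by simp only [transpose_mul, Matrix.mul_assoc]
    _ = Y * A * (X * A) := by rw [hX4, hY4]
    _ = Y * (A * X * A) := by simp only [Matrix.mul_assoc]
    _ = Y * A := by rw [hX1]
  calc X = X * A * X := hX2.symm
  _ = Y * A * X := by rw [hXA]
  _ = Y * (A * X) := by rw [Matrix.mul_assoc]
  _ = Y * (A * Y) := by rw [hAX]
  _ = Y * A * Y := by rw [← Matrix.mul_assoc]
  _ = Y := hY2

lemma pinv_eq {m n : ℕ} {A : Matrix (Fin m) (Fin n) ℝ} {B : Matrix (Fin n) (Fin m) ℝ}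
    (hB : Penrose A B) : pinv A = B := by
  have h : ∃ B : Matrix (Fin n) (Fin m) ℝ,
      A * B * A = A ∧ B * A * B = B ∧ (A * B)ᵀ = A * B ∧ (B * A)ᵀ = B * A := ⟨B, hB⟩
  rw [pinv, dif_pos h]
  exact penrose_unique h.choose_spec hB

lemma penrose_pinv_of_isHermitian {n : ℕ} {A : Matrix (Fin n) (Fin n) ℝ}
    (hA : A.IsHermitian) : Penrose A (pinv A) ∧ (pinv A)ᵀ = pinv A := by
  set U : Matrix (Fin n) (Fin n) ℝ := (hA.eigenvectorUnitary : Matrix (Fin n) (Fin n) ℝ) with hUdef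
  have hU2 : star U * U = 1 := (Matrix.mem_unitaryGroup_iff').mp hA.eigenvectorUnitary.2
  set ev : Fin n → ℝ := hA.eigenvalues with hev
  have hspec : A = U * diagonal ev * star U := by
    have h := hA.spectral_theorem
    rwa [show (RCLike.ofReal ∘ hA.eigenvalues : Fin n → ℝ) = ev by
      funext i; simp [hev]] at h
  have hmul : ∀ d e : Fin n → ℝ, (U * diagonal d * star U) * (U * diagonal e * star U)
      = U * diagonal (fun i => d i * e i) * star U := by
    intro d e
    calc (U * diagonal d * star U) * (U * diagonal e * star U)
        = U * diagonal d * (star U * U) * diagonal e * star U := by noncomm_ring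
    _ = U * (diagonal d * diagonal e) * star U := by rw [hU2]; noncomm_ring
    _ = U * diagonal (fun i => d i * e i) * star U := by rw [diagonal_mul_diagonal]
  have hsymm : ∀ d : Fin n → ℝ, (U * diagonal d * star U)ᵀ = U * diagonal d * star U := by
    intro d
    rw [← conjTranspose_eq_transpose_of_trivial]
    rw [conjTranspose_mul, conjTranspose_mul, star_eq_conjTranspose,
      conjTranspose_conjTranspose, diagonal_conjTranspose]
    have hd : (star d) = d := by funext i; simp
    rw [hd, mul_assoc]
  set B : Matrix (Fin n) (Fin n) ℝ := U * diagonal (fun i => (ev i)⁻¹) * star U with hB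
  have hPen : Penrose A B := by
    refine ⟨?_, ?_, ?_, ?_⟩
    · rw [hspec, hB, hmul, hmul]
      congr 2
      funext i
      rcases eq_or_ne (ev i) 0 with h | h <;> field_simp [h]
    · rw [hspec, hB, hmul, hmul]
      congr 2
      funext i
      rcases eq_or_ne (ev i) 0 with h | h <;> field_simp [h]
    · rw [hspec, hB, hmul, hsymm]
    · rw [hspec, hB, hmul, hsymm]
  rw [pinv_eq hPen]
  exact ⟨hPen, by rw [hB, hsymm]⟩

lemma qmi_eq {q r : ℕ} (P : Matrix (Fin q ⊕ Fin r) (Fin q ⊕ Fin r) ℝ)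
    (Z : Matrix (Fin r) (Fin q) ℝ) :
    qmi P Z = P.toBlocks₁₁ + P.toBlocks₁₂ * Z + Zᵀ * P.toBlocks₂₁ + Zᵀ * (P.toBlocks₂₂ * Z) := by
  rw [show qmi P Z = HMul.hMul (self := Matrix.instHMulOfFintypeOfMulOfAddCommMonoid) (HMul.hMul (self := Matrix.instHMulOfFintypeOfMulOfAddCommMonoid) (fromRows (1 : Matrix (Fin q) (Fin q) ℝ) Z)ᵀ P) (fromRows 1 Z) from rfl]
  conv_lhs => rw [← fromBlocks_toBlocks P]
  rw [transpose_fromRows, Matrix.mul_assoc, fromBlocks_mul_fromRows,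
    fromCols_mul_fromRows]
  simp only [transpose_one, Matrix.mul_one, Matrix.one_mul, Matrix.mul_add]
  abel

/-- For `Π ∈ Π_{q,r}`, the set `Z_r(Π)` has nonempty interior
if and only if `Π₂₂ = 0` or `Π|Π₂₂` is positive definite. -/
theorem stmt_2 {q r : ℕ} (P : Matrix (Fin q ⊕ Fin r) (Fin q ⊕ Fin r) ℝ) (hP : memPi P) :
    (interior (ZrSet P)).Nonempty ↔ (P.toBlocks₂₂ = 0 ∨ (schurC P).PosDef) := by
  obtain ⟨hs, h22, hsc, hker⟩ := hP
  have hA_symm : P.toBlocks₂₂ᵀ = P.toBlocks₂₂ := by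
    ext i j
    exact congrFun (congrFun hs (Sum.inr i)) (Sum.inr j)
  have hB21 : P.toBlocks₂₁ = P.toBlocks₁₂ᵀ := by
    ext i j
    exact (congrFun (congrFun hs (Sum.inr i)) (Sum.inl j)).symm
  have hA_herm : P.toBlocks₂₂.IsHermitian := by
    show P.toBlocks₂₂ᴴ = P.toBlocks₂₂
    rw [conjTranspose_eq_transpose_of_trivial]
    exact hA_symm
  obtain ⟨⟨hN1, hN2, hN3, hN4⟩, hNs⟩ := penrose_pinv_of_isHermitian hA_herm
  -- kernel identities
  have hNA : P.toBlocks₁₂ * (pinv P.toBlocks₂₂ * P.toBlocks₂₂) = P.toBlocks₁₂ := by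
    have hM : P.toBlocks₂₂ * (pinv P.toBlocks₂₂ * P.toBlocks₂₂ - 1) = 0 := by
      rw [Matrix.mul_sub, Matrix.mul_one, ← Matrix.mul_assoc, hN1, sub_self]
    have h0 : P.toBlocks₁₂ * (pinv P.toBlocks₂₂ * P.toBlocks₂₂ - 1) = 0 := by
      ext i j
      have hcol : P.toBlocks₂₂ *ᵥ ((pinv P.toBlocks₂₂ * P.toBlocks₂₂ - 1) *ᵥ Pi.single j 1)
          = 0 := by rw [mulVec_mulVec, hM, zero_mulVec]
      have hk := hker _ hcol
      rw [mulVec_mulVec] at hk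
      have hkj := congrFun hk i
      rw [mulVec_single] at hkj
      simpa using hkj
    rw [Matrix.mul_sub, Matrix.mul_one, sub_eq_zero] at h0
    exact h0
  have hAN : P.toBlocks₂₂ * (pinv P.toBlocks₂₂ * P.toBlocks₂₁) = P.toBlocks₂₁ := by
    have h := congrArg Matrix.transpose hNA
    rw [transpose_mul, transpose_mul, hNs, hA_symm, ← hB21] at h
    rw [← Matrix.mul_assoc]
    exact h
  -- completion of squares
  have key : ∀ Z : Matrix (Fin r) (Fin q) ℝ,
      qmi P Z = schurC P + (Z + pinv P.toBlocks₂₂ * P.toBlocks₂₁)ᵀ *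
        (P.toBlocks₂₂ * (Z + pinv P.toBlocks₂₂ * P.toBlocks₂₁)) := by
    intro Z
    rw [qmi_eq, schurC]
    have e1 : (Z + pinv P.toBlocks₂₂ * P.toBlocks₂₁)ᵀ
        = Zᵀ + P.toBlocks₁₂ * pinv P.toBlocks₂₂ := by
      rw [transpose_add, transpose_mul, hNs, hB21, transpose_transpose]
    rw [e1, Matrix.mul_add _ Z, hAN]
    have e2 : P.toBlocks₁₂ * pinv P.toBlocks₂₂ * (P.toBlocks₂₂ * Z) = P.toBlocks₁₂ * Z := by
      calc P.toBlocks₁₂ * pinv P.toBlocks₂₂ * (P.toBlocks₂₂ * Z)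
          = P.toBlocks₁₂ * (pinv P.toBlocks₂₂ * P.toBlocks₂₂) * Z := by
            simp only [Matrix.mul_assoc]
      _ = P.toBlocks₁₂ * Z := by rw [hNA]
    rw [Matrix.add_mul, Matrix.mul_add, Matrix.mul_add, e2]
    simp only [Matrix.mul_assoc]
    abel
  -- symmetry of qmi
  have hherm : ∀ Z : Matrix (Fin r) (Fin q) ℝ, (qmi P Z).IsHermitian := by
    intro Z
    show (qmi P Z)ᴴ = qmi P Z
    rw [conjTranspose_eq_transpose_of_trivial, show qmi P Z = HMul.hMul (self := Matrix.instHMulOfFintypeOfMulOfAddCommMonoid) (HMul.hMul (self := Matrix.instHMulOfFintypeOfMulOfAddCommMonoid) (fromRows (1 : Matrix (Fin q) (Fin q) ℝ) Z)ᵀ P) (fromRows 1 Z) from rfl]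
    have hs' : Pᵀ = P := hs
    simp only [transpose_mul, transpose_transpose, Matrix.mul_assoc, hs']
  constructor
  · -- forward direction
    rintro ⟨Z₀, hZ₀⟩
    by_contra hcon
    push_neg at hcon
    obtain ⟨hA0, hSpd⟩ := hcon
    obtain ⟨v, hv⟩ : ∃ v, P.toBlocks₂₂ *ᵥ v ≠ 0 := by
      by_contra hall
      push_neg at hall
      refine hA0 ?_
      ext i j
      have h := congrFun (hall (Pi.single j 1)) i
      rw [mulVec_single] at h
      simpa using h
    obtain ⟨x, hx0, hxle⟩ : ∃ x : Fin q → ℝ, x ≠ 0 ∧ ¬(0 < x ⬝ᵥ (schurC P *ᵥ x)) := by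
      by_contra hall
      push_neg at hall
      exact hSpd (Matrix.PosDef.of_dotProduct_mulVec_pos hsc.1 fun x hx => by simpa using hall x hx)
    have hx1 : x ⬝ᵥ (schurC P *ᵥ x) = 0 :=
      le_antisymm (not_lt.mp hxle) (by simpa using hsc.dotProduct_mulVec_nonneg x)
    have hSx : schurC P *ᵥ x = 0 :=
      (hsc.dotProduct_mulVec_zero_iff x).mp (by simpa using hx1)
    have hlin : ∀ Z ∈ ZrSet P,
        P.toBlocks₂₂ *ᵥ ((Z + pinv P.toBlocks₂₂ * P.toBlocks₂₁) *ᵥ x) = 0 := by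
      intro Z hZ
      set W := Z + pinv P.toBlocks₂₂ * P.toBlocks₂₁ with hW
      have hposq : (0:ℝ) ≤ x ⬝ᵥ (qmi P Z *ᵥ x) := by simpa using Matrix.PosSemidef.dotProduct_mulVec_nonneg hZ x
      rw [key Z, ← hW, add_mulVec, dotProduct_add, hSx, dotProduct_zero, zero_add] at hposq
      have hrw : x ⬝ᵥ ((Wᵀ * (P.toBlocks₂₂ * W)) *ᵥ x)
          = (W *ᵥ x) ⬝ᵥ (P.toBlocks₂₂ *ᵥ (W *ᵥ x)) := by
        rw [← mulVec_mulVec, dotProduct_mulVec x Wᵀ, vecMul_transpose, ← mulVec_mulVec]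
      rw [hrw] at hposq
      have hneg : (0:ℝ) ≤ -((W *ᵥ x) ⬝ᵥ (P.toBlocks₂₂ *ᵥ (W *ᵥ x))) := by
        have h := h22.dotProduct_mulVec_nonneg (W *ᵥ x)
        rwa [star_trivial, neg_mulVec, dotProduct_neg] at h
      have hzero : (W *ᵥ x) ⬝ᵥ (P.toBlocks₂₂ *ᵥ (W *ᵥ x)) = 0 := le_antisymm (by linarith) hposq
      have h0' : (-P.toBlocks₂₂) *ᵥ (W *ᵥ x) = 0 := by
        refine (h22.dotProduct_mulVec_zero_iff (W *ᵥ x)).mp ?_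
        rw [star_trivial, neg_mulVec, dotProduct_neg, hzero, neg_zero]
      rwa [neg_mulVec, neg_eq_zero] at h0'
    -- the affine constraint kills the interior
    set T : Matrix (Fin r) (Fin q) ℝ := vecMulVec (P.toBlocks₂₂ *ᵥ v) x with hT
    have hTx : T *ᵥ x = (x ⬝ᵥ x) • (P.toBlocks₂₂ *ᵥ v) := by
      ext i
      simp only [hT, mulVec, dotProduct, vecMulVec_apply, Pi.smul_apply, smul_eq_mul]
      rw [Finset.sum_mul]
      exact Finset.sum_congr rfl fun j _ => by ring
    have hnhds : ZrSet P ∈ 𝓝 Z₀ := mem_interior_iff_mem_nhds.mp hZ₀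
    have htend : Filter.Tendsto (fun t : ℝ => Z₀ + t • T) (𝓝 0) (𝓝 Z₀) := by
      have hγ : Continuous fun t : ℝ => Z₀ + t • T :=
        continuous_const.add (continuous_id.smul continuous_const)
      have h := hγ.continuousAt (x := (0:ℝ))
      simpa [ContinuousAt] using h
    have hev : ∀ᶠ t in 𝓝[≠] (0:ℝ), Z₀ + t • T ∈ ZrSet P :=
      (htend.mono_left nhdsWithin_le_nhds).eventually hnhds
    obtain ⟨t, htmem, htne⟩ := (hev.and eventually_mem_nhdsWithin).exists
    have h1 := hlin Z₀ (interior_subset hZ₀)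
    have h2 := hlin _ htmem
    have h3 : P.toBlocks₂₂ *ᵥ ((t • T) *ᵥ x) = 0 := by
      have hre : (Z₀ + t • T + pinv P.toBlocks₂₂ * P.toBlocks₂₁)
          = (Z₀ + pinv P.toBlocks₂₂ * P.toBlocks₂₁) + t • T := by abel
      rw [hre, add_mulVec, mulVec_add, h1, zero_add] at h2
      exact h2
    rw [smul_mulVec, mulVec_smul, smul_eq_zero] at h3
    rcases h3 with h3 | h3
    · exact htne h3
    rw [hTx, mulVec_smul, smul_eq_zero] at h3
    rcases h3 with h3 | h3
    · exact hx0 (dotProduct_self_eq_zero.mp h3)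
    have h4 : (P.toBlocks₂₂ *ᵥ v) ⬝ᵥ (P.toBlocks₂₂ *ᵥ v) = 0 := by
      have h5 : v ⬝ᵥ (P.toBlocks₂₂ *ᵥ (P.toBlocks₂₂ *ᵥ v)) = 0 := by
        rw [h3, dotProduct_zero]
      rwa [dotProduct_mulVec, ← mulVec_transpose, hA_symm] at h5
    exact hv (dotProduct_self_eq_zero.mp h4)
  · -- backward direction
    rintro (h0 | hpd)
    · -- Π₂₂ = 0
      have hB12 : P.toBlocks₁₂ = 0 := by
        ext i j
        have hk := hker (Pi.single j 1) (by rw [h0, zero_mulVec])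
        have h := congrFun hk i
        rw [mulVec_single] at h
        simpa using h
      have hB21' : P.toBlocks₂₁ = 0 := by rw [hB21, hB12, transpose_zero]
      have hsc' : P.toBlocks₁₁.PosSemidef := by
        have h := hsc
        rwa [schurC, hB12, Matrix.zero_mul, Matrix.zero_mul, sub_zero] at h
      have hZr : ZrSet P = Set.univ := by
        refine Set.eq_univ_of_forall fun Z => ?_
        show (qmi P Z).PosSemidef
        rw [qmi_eq, h0, hB12, hB21']
        simpa using hsc'
      rw [hZr, interior_univ]
      exact ⟨0, trivial⟩
    · -- Schur complement positive definite
      set Z₀ : Matrix (Fin r) (Fin q) ℝ := -(pinv P.toBlocks₂₂ * P.toBlocks₂₁) with hZ₀def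
      have hq0 : qmi P Z₀ = schurC P := by
        rw [key Z₀, hZ₀def, neg_add_cancel]
        simp
      have hgcont : Continuous fun p : Matrix (Fin r) (Fin q) ℝ × (Fin q → ℝ) =>
          p.2 ⬝ᵥ (qmi P p.1 *ᵥ p.2) := by
        have hqc : Continuous fun Z : Matrix (Fin r) (Fin q) ℝ => qmi P Z := by
          have he : (fun Z : Matrix (Fin r) (Fin q) ℝ => qmi P Z) = fun Z =>
              P.toBlocks₁₁ + P.toBlocks₁₂ * Z + Zᵀ * P.toBlocks₂₁
                + Zᵀ * (P.toBlocks₂₂ * Z) := funext (qmi_eq P)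
          rw [he]
          exact ((continuous_const.add (continuous_const.matrix_mul continuous_id)).add
              (continuous_id.matrix_transpose.matrix_mul continuous_const)).add
            (continuous_id.matrix_transpose.matrix_mul (continuous_const.matrix_mul continuous_id))
        exact continuous_snd.dotProduct ((hqc.comp continuous_fst).matrix_mulVec
          continuous_snd)
      have hopen : IsOpen {p : Matrix (Fin r) (Fin q) ℝ × (Fin q → ℝ) |
          0 < p.2 ⬝ᵥ (qmi P p.1 *ᵥ p.2)} := isOpen_lt continuous_const hgcont
      have hsub : ({Z₀} : Set (Matrix (Fin r) (Fin q) ℝ)) ×ˢ Metric.sphere (0 : Fin q → ℝ) 1 ⊆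
          {p | 0 < p.2 ⬝ᵥ (qmi P p.1 *ᵥ p.2)} := by
        rintro ⟨Z, x⟩ ⟨hZ, hx⟩
        rw [Set.mem_singleton_iff] at hZ
        subst hZ
        have hxne : x ≠ 0 := by
          intro hc
          rw [mem_sphere_zero_iff_norm, hc, norm_zero] at hx
          norm_num at hx
        have := hpd.dotProduct_mulVec_pos hxne
        rw [star_trivial] at this
        show 0 < x ⬝ᵥ (qmi P Z₀ *ᵥ x)
        rwa [hq0]
      obtain ⟨u, w, hu, hw, hZu, hsw, huw⟩ := generalized_tube_lemma isCompact_singleton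
        (isCompact_sphere (0 : Fin q → ℝ) 1) hopen hsub
      have husub : u ⊆ ZrSet P := by
        intro Z hZ
        refine Matrix.PosSemidef.of_dotProduct_mulVec_nonneg (hherm Z) fun x => ?_
        rw [star_trivial]
        rcases eq_or_ne x 0 with rfl | hxne
        · simp
        have hnx : ‖x‖ ≠ 0 := norm_ne_zero_iff.mpr hxne
        set y : Fin q → ℝ := ‖x‖⁻¹ • x with hy
        have hysphere : y ∈ Metric.sphere (0 : Fin q → ℝ) 1 := by
          rw [mem_sphere_zero_iff_norm, hy, norm_smul, norm_inv, norm_norm]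
          exact inv_mul_cancel₀ hnx
        have hpos : 0 < y ⬝ᵥ (qmi P Z *ᵥ y) :=
          huw (show (Z, y) ∈ u ×ˢ w from Set.mem_prod.mpr ⟨hZ, hsw hysphere⟩)
        have hyy : y ⬝ᵥ (qmi P Z *ᵥ y) = ‖x‖⁻¹ * (‖x‖⁻¹ * (x ⬝ᵥ (qmi P Z *ᵥ x))) := by
          rw [hy, smul_dotProduct, mulVec_smul, dotProduct_smul, smul_eq_mul, smul_eq_mul]
        rw [hyy] at hpos
        have hninv : (0:ℝ) < ‖x‖⁻¹ := inv_pos.mpr (norm_pos_iff.mpr hxne)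
        nlinarith [hpos, mul_pos hninv hninv]
      exact ⟨Z₀, interior_maximal husub hu (hZu rfl)⟩
end

section
/- Let Π ∈ Π_{q,r}. Then the set Z_r⁰(Π) is nonempty if and only if rank Π₂₂ ≥ rank (Π|Π₂₂). -/
open Matrix
open scoped Classical

/-- Penrose conditions. -/
def IsPenrose {m n : ℕ} (A : Matrix (Fin m) (Fin n) ℝ) (B : Matrix (Fin n) (Fin m) ℝ) : Prop :=
  A * B * A = A ∧ B * A * B = B ∧ (A * B)ᵀ = A * B ∧ (B * A)ᵀ = B * A

lemma penrose_unique_s4 {n : ℕ} {A B C : Matrix (Fin n) (Fin n) ℝ}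
    (hB : IsPenrose A B) (hC : IsPenrose A C) : B = C := by
  obtain ⟨hB1, hB2, hB3, hB4⟩ := hB
  obtain ⟨hC1, hC2, hC3, hC4⟩ := hC
  have hAB : A * B = A * C := by
    calc A * B = (A * C * A) * B := by rw [hC1]
    _ = ((A * B) * (A * C))ᵀ := by rw [transpose_mul, hC3, hB3]; noncomm_ring
    _ = (A * C)ᵀ := by rw [show A * B * (A * C) = (A * B * A) * C by noncomm_ring, hB1]
    _ = A * C := hC3
  have hBA : B * A = C * A := by
    calc B * A = B * (A * C * A) := by rw [hC1]
    _ = ((C * A) * (B * A))ᵀ := by rw [transpose_mul, hC4, hB4]; noncomm_ring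
    _ = (C * A)ᵀ := by rw [show C * A * (B * A) = C * (A * B * A) by noncomm_ring, hB1]
    _ = C * A := hC4
  calc B = B * A * B := hB2.symm
  _ = C * A * C := by rw [hBA, mul_assoc, hAB, ← mul_assoc]
  _ = C := hC2

lemma exists_penrose {n : ℕ} (A : Matrix (Fin n) (Fin n) ℝ) (hA : A.IsHermitian) :
    ∃ B : Matrix (Fin n) (Fin n) ℝ, IsPenrose A B := by
  set U : Matrix (Fin n) (Fin n) ℝ := (hA.eigenvectorUnitary : Matrix (Fin n) (Fin n) ℝ) with hUdef
  have hU1 : star U * U = 1 := Unitary.star_mul_self_of_mem (hA.eigenvectorUnitary).2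
  have hspec : A = U * diagonal hA.eigenvalues * star U := by
    have := hA.spectral_theorem
    simpa [RCLike.ofReal_real_eq_id] using this
  set e := hA.eigenvalues with he
  set D : Matrix (Fin n) (Fin n) ℝ := diagonal e with hD
  set D' : Matrix (Fin n) (Fin n) ℝ := diagonal (fun i => (e i)⁻¹) with hD'
  have hconj : ∀ X Y : Matrix (Fin n) (Fin n) ℝ,
      (U * X * star U) * (U * Y * star U) = U * (X * Y) * star U := by
    intro X Y
    calc (U * X * star U) * (U * Y * star U) = U * X * (star U * U) * (Y * star U) := by
          simp only [Matrix.mul_assoc]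
    _ = U * (X * Y) * star U := by rw [hU1]; simp only [Matrix.mul_assoc, Matrix.one_mul]
  have hsymm : ∀ f : Fin n → ℝ, (U * diagonal f * star U)ᵀ = U * diagonal f * star U := by
    intro f
    have hstar : star U = Uᵀ := conjTranspose_eq_transpose_of_trivial U
    rw [hstar, transpose_mul, transpose_mul, transpose_transpose, diagonal_transpose,
      Matrix.mul_assoc]
  have hDD'D : D * D' * D = D := by
    rw [hD, hD', diagonal_mul_diagonal, diagonal_mul_diagonal]
    funext i
    by_cases h : e i = 0 <;> field_simp [h]
  have hD'DD' : D' * D * D' = D' := by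
    rw [hD, hD', diagonal_mul_diagonal, diagonal_mul_diagonal]
    funext i
    by_cases h : e i = 0 <;> field_simp [h]
  refine ⟨U * D' * star U, ?_, ?_, ?_, ?_⟩
  · rw [hspec, hconj, hconj, hDD'D]
  · rw [hspec, hconj, hconj, hD'DD']
  · rw [hspec, hconj, diagonal_mul_diagonal, hsymm]
  · rw [hspec, hconj, diagonal_mul_diagonal, hsymm]

lemma pinv_isPenrose {n : ℕ} {A : Matrix (Fin n) (Fin n) ℝ} (hA : A.IsHermitian) :
    IsPenrose A (pinv A) := by
  have hex : ∃ B : Matrix (Fin n) (Fin n) ℝ,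
      A * B * A = A ∧ B * A * B = B ∧ (A * B)ᵀ = A * B ∧ (B * A)ᵀ = B * A := by
    simpa [IsPenrose] using exists_penrose A hA
  rw [IsPenrose, pinv, dif_pos hex]
  exact hex.choose_spec

lemma pinv_symm {n : ℕ} {A : Matrix (Fin n) (Fin n) ℝ} (hA : A.IsHermitian) :
    (pinv A)ᵀ = pinv A := by
  have hAt : Aᵀ = A := by
    have := hA
    rwa [IsHermitian, conjTranspose_eq_transpose_of_trivial] at this
  obtain ⟨h1, h2, h3, h4⟩ := pinv_isPenrose hA
  set B := pinv A
  have hBt : IsPenrose A Bᵀ := by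
    refine ⟨?_, ?_, ?_, ?_⟩
    · calc A * Bᵀ * A = (Aᵀ * B * Aᵀ)ᵀ := by simp [transpose_mul, Matrix.mul_assoc, hAt]
      _ = A := by rw [hAt, h1, hAt]
    · calc Bᵀ * A * Bᵀ = (B * Aᵀ * B)ᵀ := by simp [transpose_mul, Matrix.mul_assoc]
      _ = Bᵀ := by rw [hAt, h2]
    · calc (A * Bᵀ)ᵀ = B * Aᵀ := by simp [transpose_mul]
      _ = B * A := by rw [hAt]
      _ = (B * A)ᵀ := h4.symm
      _ = Aᵀ * Bᵀ := by simp [transpose_mul]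
      _ = A * Bᵀ := by rw [hAt]
    · calc (Bᵀ * A)ᵀ = Aᵀ * B := by simp [transpose_mul]
      _ = A * B := by rw [hAt]
      _ = (A * B)ᵀ := h3.symm
      _ = Bᵀ * Aᵀ := by simp [transpose_mul]
      _ = Bᵀ * A := by rw [hAt]
  exact penrose_unique_s4 hBt ⟨h1, h2, h3, h4⟩

section Blocks

variable {q r : ℕ} {P : Matrix (Fin q ⊕ Fin r) (Fin q ⊕ Fin r) ℝ}

lemma blocks22_symm (hs : P.IsSymm) : (P.toBlocks₂₂)ᵀ = P.toBlocks₂₂ := by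
  ext i j
  have := congrFun (congrFun hs.eq (Sum.inr j)) (Sum.inr i)
  simpa [toBlocks₂₂, transpose_apply] using this.symm

lemma blocks21_eq (hs : P.IsSymm) : (P.toBlocks₁₂)ᵀ = P.toBlocks₂₁ := by
  ext i j
  have := congrFun (congrFun hs.eq (Sum.inr i)) (Sum.inl j)
  simpa [toBlocks₁₂, toBlocks₂₁, transpose_apply] using this

lemma blocks22_herm (hs : P.IsSymm) : (P.toBlocks₂₂).IsHermitian := by
  rw [IsHermitian, conjTranspose_eq_transpose_of_trivial]
  exact blocks22_symm hs

lemma qmi_expand (Z : Matrix (Fin r) (Fin q) ℝ) :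
    qmi P Z = P.toBlocks₁₁ + P.toBlocks₁₂ * Z + Zᵀ * P.toBlocks₂₁ + Zᵀ * (P.toBlocks₂₂ * Z) := by
  conv_lhs => rw [qmi, ← fromBlocks_toBlocks P]
  erw [Matrix.mul_assoc, fromBlocks_mul_fromRows, transpose_fromRows, transpose_one,
    fromCols_mul_fromRows]
  simp only [Matrix.mul_one, Matrix.one_mul, Matrix.mul_add]
  abel

end Blocks

lemma mat_ext_of_mulVec {m n : ℕ} {M N : Matrix (Fin m) (Fin n) ℝ}
    (h : ∀ x, M *ᵥ x = N *ᵥ x) : M = N := by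
  ext i j
  have := congrFun (h (Pi.single j 1)) i
  simpa [mulVec_single] using this

section Key

variable {q r : ℕ} {P : Matrix (Fin q ⊕ Fin r) (Fin q ⊕ Fin r) ℝ}

lemma key_identity (hs : P.IsSymm)
    (hker : ∀ x : Fin r → ℝ, P.toBlocks₂₂ *ᵥ x = 0 → P.toBlocks₁₂ *ᵥ x = 0)
    (Z : Matrix (Fin r) (Fin q) ℝ) :
    qmi P Z = schurC P + (Z + pinv P.toBlocks₂₂ * P.toBlocks₂₁)ᵀ *
      (P.toBlocks₂₂ * (Z + pinv P.toBlocks₂₂ * P.toBlocks₂₁)) := by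
  set A11 := P.toBlocks₁₁
  set A12 := P.toBlocks₁₂
  set A21 := P.toBlocks₂₁
  set A22 := P.toBlocks₂₂
  have hherm : A22.IsHermitian := blocks22_herm hs
  obtain ⟨h1, h2, h3, h4⟩ := pinv_isPenrose hherm
  set B := pinv A22 with hBdef
  have hBt : Bᵀ = B := pinv_symm hherm
  have hA22t : A22ᵀ = A22 := blocks22_symm hs
  have hA12t : A12ᵀ = A21 := blocks21_eq hs
  have h12 : A12 * (B * A22) = A12 := by
    apply mat_ext_of_mulVec
    intro x
    have h0 : A22 *ᵥ ((B * A22) *ᵥ x - x) = 0 := by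
      rw [mulVec_sub, mulVec_mulVec, ← Matrix.mul_assoc, h1, sub_self]
    have := hker _ h0
    rw [mulVec_sub, sub_eq_zero] at this
    rw [← mulVec_mulVec]
    exact this
  have h21 : A22 * (B * A21) = A21 := by
    have := congrArg transpose h12
    rw [transpose_mul, transpose_mul, hBt, hA22t, hA12t] at this
    rw [← Matrix.mul_assoc]
    exact this
  rw [qmi_expand, schurC]
  have e2 : (A21ᵀ : Matrix (Fin q) (Fin r) ℝ) = A12 := by rw [← hA12t, transpose_transpose]
  simp only [transpose_add, transpose_mul, hBt, e2, Matrix.mul_add, Matrix.add_mul,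
    h21]
  have e3 : A12 * B * (A22 * Z) = A12 * Z := by
    rw [← Matrix.mul_assoc (A12 * B) A22 Z, Matrix.mul_assoc A12 B A22, h12]
  rw [e3]
  abel

end Key

lemma rank_neg' {m n : ℕ} (M : Matrix (Fin m) (Fin n) ℝ) : (-M).rank = M.rank := by
  have h : -M = (-1 : Matrix (Fin m) (Fin m) ℝ) * M := by
    rw [Matrix.neg_mul, Matrix.one_mul]
  rw [h]
  apply Matrix.rank_mul_eq_right_of_isUnit_det
  have : ((-1 : Matrix (Fin m) (Fin m) ℝ)).det = (-1 : ℝ) ^ m := by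
    rw [show (-1 : Matrix (Fin m) (Fin m) ℝ) = -(1 : Matrix (Fin m) (Fin m) ℝ) from rfl,
      Matrix.det_neg]
    simp
  rw [this]
  exact (isUnit_one.neg).pow m

lemma exists_conj_diag {q r : ℕ} (μ : Fin r → ℝ) (ν : Fin q → ℝ) (hμ : ∀ i, 0 ≤ μ i)
    (hν : ∀ j, 0 ≤ ν j)
    (hcard : Fintype.card {j // ν j ≠ 0} ≤ Fintype.card {i // μ i ≠ 0}) :
    ∃ X : Matrix (Fin r) (Fin q) ℝ, Xᵀ * (diagonal μ * X) = diagonal ν := by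
  obtain ⟨φ⟩ := Function.Embedding.nonempty_of_card_le hcard
  set X : Matrix (Fin r) (Fin q) ℝ := Matrix.of fun i j =>
    if hj : ν j ≠ 0 then
      (if ((φ ⟨j, hj⟩ : {i // μ i ≠ 0}) : Fin r) = i then
        Real.sqrt (ν j / μ ((φ ⟨j, hj⟩ : {i // μ i ≠ 0}) : Fin r)) else 0)
    else 0 with hXdef
  refine ⟨X, ?_⟩
  ext j k
  rw [Matrix.mul_apply]
  have hterm : ∀ i, Xᵀ j i * (diagonal μ * X) i k = X i j * (μ i * X i k) := by
    intro i
    rw [transpose_apply, mul_apply]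
    congr 1
    rw [Finset.sum_eq_single i]
    · rw [diagonal_apply_eq]
    · intro b _ hb
      rw [diagonal_apply_ne' _ hb, zero_mul]
    · intro h; exact absurd (Finset.mem_univ i) h
  simp_rw [hterm]
  by_cases hj : ν j = 0
  · have hXj : ∀ i, X i j = 0 := by intro i; simp [hXdef, hj]
    simp only [hXj, zero_mul, Finset.sum_const_zero]
    rw [diagonal_apply]
    split
    · next h => exact hj.symm
    · rfl
  · by_cases hk : ν k = 0
    · have hXk : ∀ i, X i k = 0 := by intro i; simp [hXdef, hk]
      simp only [hXk, mul_zero, Finset.sum_const_zero]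
      rw [diagonal_apply]
      split
      · next h => rw [h, hk]
      · rfl
    · set i₀ : {i // μ i ≠ 0} := φ ⟨j, hj⟩ with hi₀
      set i₁ : {i // μ i ≠ 0} := φ ⟨k, hk⟩ with hi₁
      by_cases hjk : j = k
      · subst hjk
        rw [Finset.sum_eq_single (i₀ : Fin r)]
        · have hXval : X (i₀ : Fin r) j = Real.sqrt (ν j / μ (i₀ : Fin r)) := by
            simp [hXdef, hj, hi₀]
          rw [hXval, diagonal_apply_eq]
          rw [show Real.sqrt (ν j / μ (i₀ : Fin r)) * (μ (i₀ : Fin r) *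
              Real.sqrt (ν j / μ (i₀ : Fin r))) =
              μ (i₀ : Fin r) * (Real.sqrt (ν j / μ (i₀ : Fin r)) *
              Real.sqrt (ν j / μ (i₀ : Fin r))) by ring]
          rw [Real.mul_self_sqrt (div_nonneg (hν j) (hμ _))]
          have hμ0 : μ (i₀ : Fin r) ≠ 0 := i₀.2
          field_simp
        · intro b _ hb
          have : X b j = 0 := by
            simp only [hXdef, Matrix.of_apply, dif_pos hj]
            rw [if_neg]
            exact fun h => hb (h ▸ rfl) |>.elim
          rw [this, zero_mul]
        · intro h; exact absurd (Finset.mem_univ _) h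
      · rw [Finset.sum_eq_zero, diagonal_apply_ne _ hjk]
        intro i _
        rcases eq_or_ne ((i₀ : {i // μ i ≠ 0}) : Fin r) i with h1 | h1
        · rcases eq_or_ne ((i₁ : {i // μ i ≠ 0}) : Fin r) i with h2 | h2
          · exfalso
            apply hjk
            have : i₀ = i₁ := Subtype.ext (h1.trans h2.symm)
            have := φ.injective (hi₀ ▸ hi₁ ▸ this)
            exact Subtype.mk_eq_mk.mp this
          · have : X i k = 0 := by
              simp only [hXdef, Matrix.of_apply, dif_pos hk]
              rw [if_neg h2]
            rw [this, mul_zero, mul_zero]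
        · have : X i j = 0 := by
            simp only [hXdef, Matrix.of_apply, dif_pos hj]
            rw [if_neg h1]
          rw [this, zero_mul]

/-- For `Π ∈ Π_{q,r}`, the set `Z_r⁰(Π)` is nonempty
if and only if `rank Π₂₂ ≥ rank (Π|Π₂₂)`. -/
theorem stmt_4 {q r : ℕ} (P : Matrix (Fin q ⊕ Fin r) (Fin q ⊕ Fin r) ℝ) (hP : memPi P) :
    (ZrZeroSet P).Nonempty ↔ (schurC P).rank ≤ P.toBlocks₂₂.rank := by
  obtain ⟨hsymm, hN, hS, hker⟩ := hP
  have hrankN : (-P.toBlocks₂₂).rank = P.toBlocks₂₂.rank := rank_neg' _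
  constructor
  · rintro ⟨Z, hZ⟩
    have hid := key_identity hsymm hker Z
    have hZ0 : qmi P Z = 0 := hZ
    rw [hZ0] at hid
    set W := Z + pinv P.toBlocks₂₂ * P.toBlocks₂₁ with hW
    have hSeq : schurC P = Wᵀ * ((-P.toBlocks₂₂) * W) := by
      have h1 : schurC P = -(Wᵀ * (P.toBlocks₂₂ * W)) := by
        rw [eq_neg_iff_add_eq_zero]
        exact hid.symm
      rw [h1, Matrix.neg_mul, Matrix.mul_neg]
    calc (schurC P).rank = (Wᵀ * ((-P.toBlocks₂₂) * W)).rank := by rw [hSeq]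
    _ ≤ ((-P.toBlocks₂₂) * W).rank := rank_mul_le_right _ _
    _ ≤ (-P.toBlocks₂₂).rank := rank_mul_le_left _ _
    _ = P.toBlocks₂₂.rank := hrankN
  · intro hrank
    have hNH : (-P.toBlocks₂₂).IsHermitian := hN.1
    have hSH : (schurC P).IsHermitian := hS.1
    have hcard : Fintype.card {j // hSH.eigenvalues j ≠ 0} ≤
        Fintype.card {i // hNH.eigenvalues i ≠ 0} := by
      rw [← Matrix.IsHermitian.rank_eq_card_non_zero_eigs,
        ← Matrix.IsHermitian.rank_eq_card_non_zero_eigs]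
      rw [hrankN]
      exact hrank
    obtain ⟨X, hX⟩ := exists_conj_diag _ _ (fun i => hN.eigenvalues_nonneg i)
      (fun j => hS.eigenvalues_nonneg j) hcard
    set U : Matrix (Fin r) (Fin r) ℝ := (hNH.eigenvectorUnitary : Matrix (Fin r) (Fin r) ℝ)
      with hUdef
    set V : Matrix (Fin q) (Fin q) ℝ := (hSH.eigenvectorUnitary : Matrix (Fin q) (Fin q) ℝ)
      with hVdef
    have hU1 : Uᵀ * U = 1 := by
      have := Unitary.star_mul_self_of_mem (hNH.eigenvectorUnitary).2
      rwa [Matrix.star_eq_conjTranspose, conjTranspose_eq_transpose_of_trivial] at this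
    have hNspec : -P.toBlocks₂₂ = U * diagonal hNH.eigenvalues * Uᵀ := by
      have := hNH.spectral_theorem
      rw [Unitary.conjStarAlgAut_apply] at this
      rw [Matrix.star_eq_conjTranspose, conjTranspose_eq_transpose_of_trivial] at this
      simpa [RCLike.ofReal_real_eq_id] using this
    have hSspec : schurC P = V * diagonal hSH.eigenvalues * Vᵀ := by
      have := hSH.spectral_theorem
      rw [Unitary.conjStarAlgAut_apply] at this
      rw [Matrix.star_eq_conjTranspose, conjTranspose_eq_transpose_of_trivial] at this
      simpa [RCLike.ofReal_real_eq_id] using this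
    have hcancel : ∀ {k : ℕ} (M : Matrix (Fin r) (Fin k) ℝ), Uᵀ * (U * M) = M := by
      intro k M
      rw [← Matrix.mul_assoc, hU1, Matrix.one_mul]
    have hWNW : (U * X * Vᵀ)ᵀ * ((-P.toBlocks₂₂) * (U * X * Vᵀ)) = schurC P := by
      rw [hNspec, transpose_mul, transpose_mul, transpose_transpose]
      simp only [Matrix.mul_assoc]
      rw [hcancel, hcancel]
      rw [show Xᵀ * (diagonal hNH.eigenvalues * (X * Vᵀ)) =
          (Xᵀ * (diagonal hNH.eigenvalues * X)) * Vᵀ by simp only [Matrix.mul_assoc], hX]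
      rw [← Matrix.mul_assoc]
      exact hSspec.symm
    refine ⟨U * X * Vᵀ - pinv P.toBlocks₂₂ * P.toBlocks₂₁, ?_⟩
    show qmi P _ = 0
    rw [key_identity hsymm hker, sub_add_cancel]
    have hA22 : P.toBlocks₂₂ * (U * X * Vᵀ) = -((-P.toBlocks₂₂) * (U * X * Vᵀ)) := by
      rw [Matrix.neg_mul, neg_neg]
    rw [hA22, Matrix.mul_neg, hWNW, add_neg_cancel]
end
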